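/- Let c ≥ 0 be an integer. If c ≡ 0 (mod 3) or c ≡ 1 (mod 3), then R_H(0,0,c) = {r - (c² - c)/3 : r ∈ R_H(0,0,0)}; if c ≡ 2 (mod 3), then R_H(0,0,c) = {r - (c² - c + 1)/3 : r ∈ R_H(1,1,0)}. (In each case the indicated quotient is an integer.) -/

import Mathlib

def H1 : ℤ × ℤ × ℤ → ℤ × ℤ × ℤ := fun t => (-t.1 + 1 + t.2.1 + t.2.2, t.2.1, t.2.2)
def H2 : ℤ × ℤ × ℤ → ℤ × ℤ × ℤ := fun t => (t.1, -t.2.1 + 1 + t.2.2 + t.1, t.2.2)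
def H3 : ℤ × ℤ × ℤ → ℤ × ℤ × ℤ := fun t => (t.1, t.2.1, -t.2.2 + 1 + t.1 + t.2.1)

/-- One step of the dynamics: apply one of `H1`, `H2`, `H3`. -/
def HStep (s t : ℤ × ℤ × ℤ) : Prop := t = H1 s ∨ t = H2 s ∨ t = H3 s

/-- The set of triples reachable from `(a,b,c)` by finitely many applications
of `H1`, `H2`, `H3` in any order. -/
def TH (a b c : ℤ) : Set (ℤ × ℤ × ℤ) := {t | Relation.ReflTransGen HStep (a, b, c) t}

/-- The set of integers represented as a component of a triple in `TH a b c`. -/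
def RH (a b c : ℤ) : Set ℤ :=
  {r | ∃ t ∈ TH a b c, r = t.1 ∨ r = t.2.1 ∨ r = t.2.2}

lemma HStep_symm : Symmetric HStep := by
  rintro ⟨x, y, z⟩ t (rfl | rfl | rfl)
  · exact Or.inl (by simp [H1, Prod.ext_iff]; ring)
  · exact Or.inr (Or.inl (by simp [H2, Prod.ext_iff]; ring))
  · exact Or.inr (Or.inr (by simp [H3, Prod.ext_iff]; ring))

lemma TH_congr {a b c x y z : ℤ} (h : ((x, y, z) : ℤ × ℤ × ℤ) ∈ TH a b c) :
    TH a b c = TH x y z := by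
  have hsym : Symmetric (Relation.ReflTransGen HStep) :=
    by haveI : Std.Symm HStep := ⟨HStep_symm⟩; exact fun x y h => Std.Symm.symm x y h
  ext t
  exact ⟨fun ht => (hsym h).trans ht, fun ht => h.trans ht⟩

lemma RH_congr {a b c x y z : ℤ} (h : ((x, y, z) : ℤ × ℤ × ℤ) ∈ TH a b c) :
    RH a b c = RH x y z := by
  unfold RH; rw [TH_congr h]

lemma HStep_translate (k : ℤ) {s t : ℤ × ℤ × ℤ} (h : HStep s t) :
    HStep (s.1 + k, s.2.1 + k, s.2.2 + k) (t.1 + k, t.2.1 + k, t.2.2 + k) := by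
  obtain ⟨x, y, z⟩ := s
  rcases h with rfl | rfl | rfl
  · exact Or.inl (by simp [H1, Prod.ext_iff]; ring)
  · exact Or.inr (Or.inl (by simp [H2, Prod.ext_iff]; ring))
  · exact Or.inr (Or.inr (by simp [H3, Prod.ext_iff]; ring))

lemma TH_translate {a b c : ℤ} (k : ℤ) {t : ℤ × ℤ × ℤ} (h : t ∈ TH a b c) :
    (t.1 + k, t.2.1 + k, t.2.2 + k) ∈ TH (a + k) (b + k) (c + k) :=
  Relation.ReflTransGen.lift (fun u : ℤ × ℤ × ℤ => (u.1 + k, u.2.1 + k, u.2.2 + k))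
    (fun _ _ h => HStep_translate k h) _ _ h

lemma RH_mem_translate {a b c k r : ℤ} (h : r ∈ RH a b c) :
    r + k ∈ RH (a + k) (b + k) (c + k) := by
  obtain ⟨t, ht, hr⟩ := h
  exact ⟨(t.1 + k, t.2.1 + k, t.2.2 + k), TH_translate k ht, by
    rcases hr with rfl | rfl | rfl <;> simp⟩

lemma RH_translate (a b c k : ℤ) :
    RH (a + k) (b + k) (c + k) = (fun r : ℤ => r + k) '' RH a b c := by
  ext r
  constructor
  · intro hr
    refine ⟨r - k, ?_, by ring⟩
    have := RH_mem_translate (k := -k) hr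
    simpa [sub_eq_add_neg] using this
  · rintro ⟨s, hs, rfl⟩
    exact RH_mem_translate hs

lemma RH_translate' (a b c k a' b' c' : ℤ) (ha : a' = a + k) (hb : b' = b + k)
    (hc : c' = c + k) : RH a' b' c' = (fun r : ℤ => r + k) '' RH a b c := by
  subst ha hb hc; exact RH_translate a b c k

lemma chain (c : ℤ) : ((4 - 2*c, 4 - 2*c, 1 - c) : ℤ × ℤ × ℤ) ∈ TH 0 0 c := by
  have s1 : HStep (0, 0, c) (0, 0, 1 - c) :=
    Or.inr (Or.inr (by simp [H3, Prod.ext_iff]; ring))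
  have s2 : HStep (0, 0, 1 - c) (2 - c, 0, 1 - c) :=
    Or.inl (by simp [H1, Prod.ext_iff]; ring)
  have s3 : HStep (2 - c, 0, 1 - c) (2 - c, 4 - 2*c, 1 - c) :=
    Or.inr (Or.inl (by simp [H2, Prod.ext_iff]; ring))
  have s4 : HStep (2 - c, 4 - 2*c, 1 - c) (4 - 2*c, 4 - 2*c, 1 - c) :=
    Or.inl (by simp [H1, Prod.ext_iff]; ring)
  exact Relation.ReflTransGen.tail
    (Relation.ReflTransGen.tail
      (Relation.ReflTransGen.tail (Relation.ReflTransGen.single s1) s2) s3) s4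

lemma reduce (c d k : ℤ) (hd : d = c - 3) (hk : k = 4 - 2*c) :
    RH 0 0 c = (fun r : ℤ => r + k) '' RH 0 0 d :=
  (RH_congr (chain c)).trans
    (RH_translate' 0 0 d k _ _ _ (by omega) (by omega) (by omega))

lemma main_nat : ∀ n : ℕ,
    (((n : ℤ) % 3 = 0 ∨ (n : ℤ) % 3 = 1) →
      RH 0 0 (n : ℤ) = (fun r : ℤ => r - ((n : ℤ) ^ 2 - n) / 3) '' RH 0 0 0) ∧
    (((n : ℤ) % 3 = 2) →
      RH 0 0 (n : ℤ) = (fun r : ℤ => r - ((n : ℤ) ^ 2 - n + 1) / 3) '' RH 1 1 0) := by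
  intro n
  induction n using Nat.strong_induction_on with
  | _ n ih =>
    match n with
    | 0 =>
      constructor
      · intro _
        norm_num
      · intro h; norm_num at h
    | 1 =>
      constructor
      · intro _
        have h01 : ((0, 0, 1) : ℤ × ℤ × ℤ) ∈ TH 0 0 0 :=
          Relation.ReflTransGen.single (Or.inr (Or.inr (by simp [H3])))
        have := RH_congr h01
        norm_num
        exact this.symm
      · intro h; norm_num at h
    | 2 =>
      constructor
      · intro h; norm_num at h
      · intro _
        have h1 : ((0, 0, 2) : ℤ × ℤ × ℤ) ∈ TH 0 0 (-1) :=
          Relation.ReflTransGen.single (Or.inr (Or.inr (by simp [H3])))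
        have h2 : RH 0 0 (-1) = (fun r : ℤ => r + (-1)) '' RH 1 1 0 :=
          RH_translate' 1 1 0 (-1) _ _ _ (by ring) (by ring) (by ring)
        have h3 : RH 0 0 2 = RH 0 0 (-1) := by
          have := RH_congr h1
          have h4 := RH_congr (a := 0) (b := 0) (c := (2:ℤ))
            (x := 0) (y := 0) (z := -1) ?_
          · exact h4
          · -- (0,0,-1) reachable from (0,0,2) : H3 (0,0,2) = (0,0,-1)
            exact Relation.ReflTransGen.single (Or.inr (Or.inr (by simp [H3])))
        rw [show ((2:ℕ) : ℤ) = 2 by norm_num, h3, h2]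
        ext r
        simp only [Set.mem_image]
        norm_num
        constructor <;> rintro ⟨x, hx, he⟩ <;> exact ⟨x, hx, by omega⟩
    | (m + 3) =>
      have IH := ih m (by omega)
      have hred := reduce ((m : ℤ) + 3) (m : ℤ) (-2*(m : ℤ) - 2) (by ring) (by ring)
      have hcast : (((m + 3 : ℕ)) : ℤ) = (m : ℤ) + 3 := by push_cast; ring
      constructor
      · intro hmod
        rw [hcast] at hmod ⊢
        have hmod' : (m : ℤ) % 3 = 0 ∨ (m : ℤ) % 3 = 1 := by omega
        -- divisibility
        have hdvd : ∃ j : ℤ, (m : ℤ)^2 - m = 3 * j := by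
          rcases hmod' with h | h
          · obtain ⟨k, hk⟩ : (3 : ℤ) ∣ m := by omega
            exact ⟨3*k^2 - k, by rw [hk]; ring⟩
          · obtain ⟨k, hk⟩ : (3 : ℤ) ∣ (m - 1) := by omega
            exact ⟨3*k^2 + k, by rw [show (m:ℤ) = 3*k+1 by omega]; ring⟩
        obtain ⟨j, hj⟩ := hdvd
        have hd1 : ((m : ℤ)^2 - m) / 3 = j := by rw [hj]; omega
        have hd2 : (((m : ℤ) + 3)^2 - ((m : ℤ) + 3)) / 3 = j + 2*m + 2 := by
          rw [show ((m : ℤ) + 3)^2 - ((m : ℤ) + 3) = ((m:ℤ)^2 - m) + (6*m + 6) by ring,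
            hj]
          omega
        rw [hred, IH.1 hmod', hd2]
        ext r
        simp only [Set.image_image, Set.mem_image, hd1]
        constructor <;> rintro ⟨x, hx, he⟩ <;> exact ⟨x, hx, by omega⟩
      · intro hmod
        rw [hcast] at hmod ⊢
        have hmod' : (m : ℤ) % 3 = 2 := by omega
        have hdvd : ∃ j : ℤ, (m : ℤ)^2 - m + 1 = 3 * j := by
          obtain ⟨k, hk⟩ : (3 : ℤ) ∣ (m - 2) := by omega
          exact ⟨3*k^2 + 3*k + 1, by rw [show (m:ℤ) = 3*k+2 by omega]; ring⟩
        obtain ⟨j, hj⟩ := hdvd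
        have hd1 : ((m : ℤ)^2 - m + 1) / 3 = j := by rw [hj]; omega
        have hd2 : (((m : ℤ) + 3)^2 - ((m : ℤ) + 3) + 1) / 3 = j + 2*m + 2 := by
          rw [show ((m : ℤ) + 3)^2 - ((m : ℤ) + 3) + 1 = ((m:ℤ)^2 - m + 1) + (6*m + 6)
            by ring, hj]
          omega
        rw [hred, IH.2 hmod', hd2]
        ext r
        simp only [Set.image_image, Set.mem_image, hd1]
        constructor <;> rintro ⟨x, hx, he⟩ <;> exact ⟨x, hx, by omega⟩

theorem RH_00c_towers (c : ℤ) (hc : 0 ≤ c) :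
    (c % 3 = 0 ∨ c % 3 = 1 →
      RH 0 0 c = (fun r : ℤ => r - (c ^ 2 - c) / 3) '' RH 0 0 0) ∧
    (c % 3 = 2 →
      RH 0 0 c = (fun r : ℤ => r - (c ^ 2 - c + 1) / 3) '' RH 1 1 0) := by
  lift c to ℕ using hc with n
  exact main_nat n
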